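/- The Laplacian Δ : P_k(ℝ^d) → P_{k-2}(ℝ^d) is surjective for all d ≥ 1 and k ≥ 2. -/

import Mathlib

open MvPolynomial Finsupp
open scoped BigOperators

/-- The Laplacian on polynomials in `d` variables: `Δ P = ∑ i ∂²P/∂xᵢ²`. -/
noncomputable def polyLap {d : ℕ} (P : MvPolynomial (Fin d) ℝ) : MvPolynomial (Fin d) ℝ :=
  ∑ i : Fin d, pderiv i (pderiv i P)

noncomputable def polyLapLM (d : ℕ) : MvPolynomial (Fin d) ℝ →ₗ[ℝ] MvPolynomial (Fin d) ℝ :=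
  ∑ i : Fin d, ((pderiv i).toLinearMap ∘ₗ (pderiv i).toLinearMap)

lemma polyLap_eq_LM {d : ℕ} (P : MvPolynomial (Fin d) ℝ) : polyLap P = polyLapLM d P := by
  simp [polyLap, polyLapLM]

lemma deg_eq_sum {d : ℕ} (α : Fin d →₀ ℕ) : Finsupp.degree α = ∑ i : Fin d, α i :=
  Finset.sum_subset (Finset.subset_univ _) (fun x _ hx => Finsupp.notMem_support_iff.mp hx)

lemma deg_pair_le {d : ℕ} (α : Fin d →₀ ℕ) {i j : Fin d} (hij : i ≠ j) :
    α i + α j ≤ Finsupp.degree α := by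
  rw [deg_eq_sum]
  rw [← Finset.add_sum_erase _ _ (Finset.mem_univ i)]
  have hj : j ∈ Finset.univ.erase i := Finset.mem_erase.mpr ⟨hij.symm, Finset.mem_univ j⟩
  exact add_le_add le_rfl (Finset.single_le_sum (fun _ _ => Nat.zero_le _) hj)

lemma deg_add_single {d : ℕ} (α : Fin d →₀ ℕ) (i : Fin d) (c : ℕ) :
    Finsupp.degree (α + Finsupp.single i c) = Finsupp.degree α + c := by
  rw [deg_eq_sum, deg_eq_sum]
  have : ∑ j : Fin d, (α + Finsupp.single i c) j
      = (∑ j : Fin d, α j) + ∑ j : Fin d, Finsupp.single i c j := by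
    rw [← Finset.sum_add_distrib]; rfl
  rw [this, Finset.sum_eq_single i (fun j _ hj => Finsupp.single_eq_of_ne' (Ne.symm hj))
    (fun h => absurd (Finset.mem_univ i) h), Finsupp.single_eq_same]

lemma key_mono {d k : ℕ} (hd : 1 ≤ d) (hk : 2 ≤ k) (i₀ : Fin d)
    (n : ℕ) : ∀ α : Fin d →₀ ℕ, Finsupp.degree α = k - 2 → k - 2 - α i₀ = n →
    monomial α (1:ℝ) ∈
      (homogeneousSubmodule (Fin d) ℝ k).map (polyLapLM d) := by
  induction n using Nat.strong_induction_on with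
  | _ n ih =>
  intro α hdeg hn
  set S := (homogeneousSubmodule (Fin d) ℝ k).map (polyLapLM d) with hS
  set β := α + Finsupp.single i₀ 2 with hβ
  have hβdeg : Finsupp.degree β = k := by
    rw [hβ, deg_add_single, hdeg]; omega
  have hLmem : polyLapLM d (monomial β (1:ℝ)) ∈ S :=
    Submodule.mem_map_of_mem (isHomogeneous_monomial _ hβdeg)
  -- compute the Laplacian of the monomial
  have hβi₀ : β i₀ = α i₀ + 2 := by simp [hβ]
  have hcalc : polyLapLM d (monomial β (1:ℝ)) =
      (monomial α (((α i₀ + 2) * (α i₀ + 1) : ℕ) : ℝ)) +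
      ∑ i ∈ Finset.univ.erase i₀,
        monomial (β - Finsupp.single i 1 - Finsupp.single i 1)
          (((β i * (β i - 1) : ℕ)) : ℝ) := by
    have h1 : polyLapLM d (monomial β (1:ℝ)) =
        ∑ i : Fin d, monomial (β - Finsupp.single i 1 - Finsupp.single i 1)
          (((β i * (β i - 1) : ℕ)) : ℝ) := by
      simp only [polyLapLM, LinearMap.sum_apply, LinearMap.comp_apply,
        Derivation.coeFn_coe, pderiv_monomial, one_mul]
      refine Finset.sum_congr rfl fun i _ => ?_
      congr 1
      rw [Finsupp.tsub_apply, Finsupp.single_eq_same]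
      rcases Nat.eq_zero_or_pos (β i) with h | h
      · simp [h]
      · push_cast [Nat.cast_sub h]
        ring
    rw [h1, ← Finset.add_sum_erase _ _ (Finset.mem_univ i₀)]
    congr 1
    have hexp : β - Finsupp.single i₀ 1 - Finsupp.single i₀ 1 = α := by
      rw [tsub_tsub, ← Finsupp.single_add, hβ, add_tsub_cancel_right]
    rw [hexp, hβi₀]
    congr 2
  have hT : (∑ i ∈ Finset.univ.erase i₀,
        monomial (β - Finsupp.single i 1 - Finsupp.single i 1)
          (((β i * (β i - 1) : ℕ)) : ℝ)) ∈ S := by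
    refine Submodule.sum_mem _ fun i hi => ?_
    have hii₀ : i ≠ i₀ := (Finset.mem_erase.mp hi).1
    have hβi : β i = α i := by simp [hβ, Finsupp.single_eq_of_ne' (Ne.symm hii₀)]
    by_cases h2 : 2 ≤ α i
    · set γ := β - Finsupp.single i 1 - Finsupp.single i 1 with hγ
      have hγ2 : γ = β - Finsupp.single i 2 := by
        rw [hγ, tsub_tsub, ← Finsupp.single_add]
      have hle : Finsupp.single i 2 ≤ β := by
        rw [Finsupp.single_le_iff, hβi]; exact h2
      have hβγ : γ + Finsupp.single i 2 = β := by rw [hγ2, tsub_add_cancel_of_le hle]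
      have hγdeg : Finsupp.degree γ = k - 2 := by
        have h := hβdeg
        rw [← hβγ, deg_add_single] at h
        omega
      have hγi₀ : γ i₀ = α i₀ + 2 := by
        rw [hγ2, Finsupp.tsub_apply, Finsupp.single_eq_of_ne' hii₀, hβi₀]; omega
      have hpair : α i₀ + α i ≤ k - 2 := by
        rw [← hdeg]; exact deg_pair_le α hii₀.symm
      have hlt : k - 2 - γ i₀ < n := by rw [hγi₀]; omega
      have hmem := ih _ hlt γ hγdeg rfl
      have : monomial γ (((β i * (β i - 1) : ℕ)) : ℝ)
          = ((β i * (β i - 1) : ℕ) : ℝ) • monomial γ (1:ℝ) := by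
        rw [smul_monomial, smul_eq_mul, mul_one]
      rw [this]
      exact Submodule.smul_mem _ _ hmem
    · have hz : β i * (β i - 1) = 0 := by
        rw [hβi]
        rcases (by omega : α i = 0 ∨ α i = 1) with h | h <;> simp [h]
      rw [hz]
      simp
  have hc : (((α i₀ + 2) * (α i₀ + 1) : ℕ) : ℝ) ≠ 0 := by positivity
  have hsub : monomial α ((((α i₀ + 2) * (α i₀ + 1) : ℕ)) : ℝ) ∈ S := by
    have hm := eq_sub_of_add_eq hcalc.symm
    rw [hm]
    exact Submodule.sub_mem _ hLmem hT
  have h1 : monomial α (1:ℝ)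
      = (((α i₀ + 2) * (α i₀ + 1) : ℕ) : ℝ)⁻¹ • monomial α ((((α i₀ + 2) * (α i₀ + 1) : ℕ)) : ℝ) := by
    rw [smul_monomial, smul_eq_mul, inv_mul_cancel₀ hc]
  rw [h1]
  exact Submodule.smul_mem _ _ hsub

/-- The Laplacian `Δ : P_k(ℝ^d) → P_{k-2}(ℝ^d)` is surjective for all `d ≥ 1` and `k ≥ 2`. -/
theorem polyLap_surjective {d k : ℕ} (hd : 1 ≤ d) (hk : 2 ≤ k)
    (Q : MvPolynomial (Fin d) ℝ) (hQ : Q ∈ homogeneousSubmodule (Fin d) ℝ (k - 2)) :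
    ∃ P ∈ homogeneousSubmodule (Fin d) ℝ k, polyLap P = Q := by
  have hQS : Q ∈ (homogeneousSubmodule (Fin d) ℝ k).map (polyLapLM d) := by
    rw [← support_sum_monomial_coeff Q]
    refine Submodule.sum_mem _ fun v hv => ?_
    have hvdeg : Finsupp.degree v = k - 2 := by
      have h := ((mem_homogeneousSubmodule _ _).mp hQ) (MvPolynomial.mem_support_iff.mp hv)
      rw [Finsupp.degree_eq_weight_one]
      exact h
    have hmono := key_mono hd hk ⟨0, hd⟩ (k - 2 - v ⟨0, hd⟩) v hvdeg rfl
    have : monomial v (coeff v Q) = coeff v Q • monomial v (1:ℝ) := by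
      rw [smul_monomial, smul_eq_mul, mul_one]
    rw [this]
    exact Submodule.smul_mem _ _ hmono
  obtain ⟨P, hP, hLP⟩ := hQS
  exact ⟨P, hP, by rw [polyLap_eq_LM]; exact hLP⟩
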